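/- An n-state DFA is synchronizing if and only if it has a synchronizing word of length at most n³ (indeed at most (n³ - n)/6, but n³ suffices): whenever some synchronizing word exists, a synchronizing word of length ≤ n³ exists. -/

import Mathlib

/-- Run a word through a DFA with transition function `δ`. -/
def runWord {Q A : Type*} (δ : Q → A → Q) (q : Q) (w : List A) : Q := w.foldl δ q

lemma runWord_append {Q A : Type*} (δ : Q → A → Q) (q : Q) (u v : List A) :
    runWord δ q (u ++ v) = runWord δ (runWord δ q u) v := by
  simp [runWord, List.foldl_append]

lemma runWord_prod {Q A : Type*} (δ : Q → A → Q) (p q : Q) (w : List A) :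
    runWord (fun s a => (δ s.1 a, δ s.2 a)) (p, q) w = (runWord δ p w, runWord δ q w) := by
  induction w generalizing p q with
  | nil => rfl
  | cons a t ih => simp [runWord, List.foldl_cons] at *; exact ih _ _

/-- Shortest-witness lemma: if some word drives `s0` into `P`, a word of length
at most `card S` does. -/
lemma short_witness {S A : Type*} [Fintype S] (step : S → A → S) (s0 : S) (P : S → Prop)
    (h : ∃ w : List A, P (runWord step s0 w)) :
    ∃ w : List A, w.length ≤ Fintype.card S ∧ P (runWord step s0 w) := by
  obtain ⟨w, hw⟩ := h
  induction' hn : w.length using Nat.strong_induction_on with n ih generalizing w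
  subst hn
  by_cases hlen : w.length ≤ Fintype.card S
  · exact ⟨w, hlen, hw⟩
  · push_neg at hlen
    -- pigeonhole on prefixes
    have hcard : Fintype.card S < Fintype.card (Fin (Fintype.card S + 1)) := by simp
    obtain ⟨i, j, hij, heq⟩ := Fintype.exists_ne_map_eq_of_card_lt
      (fun i : Fin (Fintype.card S + 1) => runWord step s0 (w.take i)) hcard
    wlog hlt : (i : ℕ) < (j : ℕ) generalizing i j
    · exact this j i hij.symm heq.symm
        (by have hne : (i : ℕ) ≠ (j : ℕ) := fun h => hij (Fin.ext h); omega)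
    have hjle : (j : ℕ) ≤ w.length := by
      have := j.isLt; omega
    set w' := w.take i ++ w.drop j with hw'
    have hrun : runWord step s0 w' = runWord step s0 w := by
      rw [hw', runWord_append, heq, ← runWord_append, List.take_append_drop]
    have hlen' : w'.length < w.length := by
      simp only [hw', List.length_append, List.length_take, List.length_drop]
      omega
    exact ih w'.length hlen' w' (hrun ▸ hw) rfl

lemma collapse {Q A : Type*} [Fintype Q] [DecidableEq Q] (δ : Q → A → Q)
    (hsync : ∃ w : List A, ∃ q0 : Q, ∀ q : Q, runWord δ q w = q0) :
    ∀ (S : Finset Q), S.Nonempty →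
      ∃ w : List A, w.length ≤ (S.card - 1) * (Fintype.card Q) ^ 2 ∧
        ∃ q0 : Q, ∀ q ∈ S, runWord δ q w = q0 := by
  intro S
  induction' hn : S.card using Nat.strong_induction_on with n ih generalizing S
  subst hn
  intro hS
  rcases eq_or_lt_of_le (Finset.one_le_card.mpr hS) with h1 | h2
  · obtain ⟨a, ha⟩ := Finset.card_eq_one.mp h1.symm
    exact ⟨[], by simp, a, by simp [ha, runWord]⟩
  · obtain ⟨p, hp, q, hq, hpq⟩ := Finset.one_lt_card.mp h2
    -- merge p and q with a word of length ≤ n²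
    have hmerge : ∃ w : List A, (fun s : Q × Q => s.1 = s.2)
        (runWord (fun s a => (δ s.1 a, δ s.2 a)) (p, q) w) := by
      obtain ⟨w, q0, hw⟩ := hsync
      exact ⟨w, by rw [runWord_prod]; simp [hw p, hw q]⟩
    obtain ⟨u, hulen, hu⟩ := short_witness (fun s a => (δ s.1 a, δ s.2 a)) (p, q)
      (fun s : Q × Q => s.1 = s.2) hmerge
    rw [runWord_prod] at hu
    simp only at hu
    have hulen' : u.length ≤ (Fintype.card Q) ^ 2 := by
      simpa [Fintype.card_prod, sq] using hulen
    set f : Q → Q := fun x => runWord δ x u with hf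
    set T := S.image f with hT
    have hTsub : T ⊆ (S.erase q).image f := by
      intro x hx
      obtain ⟨y, hy, hyx⟩ := Finset.mem_image.mp hx
      by_cases hyq : y = q
      · exact Finset.mem_image.mpr ⟨p, Finset.mem_erase.mpr ⟨hpq, hp⟩, by
          rw [← hyx, hyq]; exact hu⟩
      · exact Finset.mem_image.mpr ⟨y, Finset.mem_erase.mpr ⟨hyq, hy⟩, hyx⟩
    have hTcard : T.card ≤ S.card - 1 := by
      calc T.card ≤ ((S.erase q).image f).card := Finset.card_le_card hTsub
        _ ≤ (S.erase q).card := Finset.card_image_le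
        _ = S.card - 1 := Finset.card_erase_of_mem hq
    have hTlt : T.card < S.card := lt_of_le_of_lt hTcard (by omega)
    have hTne : T.Nonempty := hS.image f
    obtain ⟨v, hvlen, q0, hv⟩ := ih T.card hTlt T rfl hTne
    refine ⟨u ++ v, ?_, q0, ?_⟩
    · have : T.card - 1 ≤ S.card - 2 := by omega
      calc (u ++ v).length = u.length + v.length := List.length_append
        _ ≤ (Fintype.card Q) ^ 2 + (T.card - 1) * (Fintype.card Q) ^ 2 := by
            exact Nat.add_le_add hulen' hvlen
        _ ≤ (Fintype.card Q) ^ 2 + (S.card - 2) * (Fintype.card Q) ^ 2 :=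
            Nat.add_le_add_left (Nat.mul_le_mul_right _ this) _
        _ = (S.card - 1) * (Fintype.card Q) ^ 2 := by
            have h3 : S.card - 1 = (S.card - 2) + 1 := by omega
            rw [h3, Nat.succ_mul, Nat.add_comm]
    · intro x hx
      rw [runWord_append]
      exact hv _ (Finset.mem_image.mpr ⟨x, hx, rfl⟩)

/-- An `n`-state DFA is synchronizing iff it has a synchronizing word of length at most `n³`. -/
theorem sync_iff_short_sync {Q A : Type*} [Fintype Q] [Nonempty Q] (δ : Q → A → Q) :
    (∃ w : List A, ∃ q0 : Q, ∀ q : Q, runWord δ q w = q0) ↔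
      (∃ w : List A, w.length ≤ (Fintype.card Q) ^ 3 ∧
        ∃ q0 : Q, ∀ q : Q, runWord δ q w = q0) := by
  classical
  constructor
  · intro hsync
    obtain ⟨w, hlen, q0, hw⟩ := collapse δ hsync Finset.univ Finset.univ_nonempty
    refine ⟨w, ?_, q0, fun q => hw q (Finset.mem_univ q)⟩
    calc w.length ≤ (Finset.univ.card - 1) * (Fintype.card Q) ^ 2 := hlen
      _ ≤ Fintype.card Q * (Fintype.card Q) ^ 2 := by
          apply Nat.mul_le_mul_right; simp only [Finset.card_univ]; exact Nat.sub_le _ _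
      _ = (Fintype.card Q) ^ 3 := by ring
  · rintro ⟨w, _, q0, hw⟩
    exact ⟨w, q0, hw⟩
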